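/- There exist absolute constants c, C > 0 such that the following holds. Let 0 < σ < 1/2 and let 0 < δ < 1 satisfy 2δ^{1-σ} ≤ 1 and δ^{1-σ} ≤ 1/40. Let p, q be natural numbers with p ≤ (1/40)δ^{σ-1} and q ≤ (1/80)δ^{2σ-1}, and set s = pδ^{-σ}, t = 2qδ^{-2σ}. Then c δ^{1-σ} ≤ |∫_0^1 e^{-πit ξ² + 2πi s ξ} g(ξ) dξ| ≤ C δ^{1-σ}. -/

import Mathlib

open Real MeasureTheory

/-- The function `g = ∑_{ℓ ∈ ℕ, 1 ≤ ℓ ≤ δ^{-σ}} χ_{(ℓδ^σ-δ, ℓδ^σ+δ)}` from Section 2. -/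
noncomputable def g (δ σ : ℝ) (x : ℝ) : ℝ :=
  ∑ ℓ ∈ Finset.Icc 1 ⌊δ ^ (-σ)⌋₊,
    Set.indicator (Set.Ioo ((ℓ : ℝ) * δ ^ σ - δ) ((ℓ : ℝ) * δ ^ σ + δ)) (fun _ => (1 : ℝ)) x

set_option maxHeartbeats 1000000 in
theorem stmt3 :
    ∃ c C : ℝ, 0 < c ∧ 0 < C ∧
      ∀ σ δ : ℝ, 0 < σ → σ < 1/2 → 0 < δ → δ < 1 →
        2 * δ ^ (1 - σ) ≤ 1 → δ ^ (1 - σ) ≤ 1/40 →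
        ∀ p q : ℕ, (p : ℝ) ≤ (1/40) * δ ^ (σ - 1) → (q : ℝ) ≤ (1/80) * δ ^ (2*σ - 1) →
        ∀ s t : ℝ, s = (p : ℝ) * δ ^ (-σ) → t = 2 * (q : ℝ) * δ ^ (-(2*σ)) →
          c * δ ^ (1 - σ) ≤
            ‖(∫ ξ in (0:ℝ)..1,
              Complex.exp (((-(π * t * ξ ^ 2) + 2 * π * s * ξ : ℝ) : ℂ) * Complex.I)
                * (g δ σ ξ : ℂ))‖ ∧
          ‖(∫ ξ in (0:ℝ)..1,
              Complex.exp (((-(π * t * ξ ^ 2) + 2 * π * s * ξ : ℝ) : ℂ) * Complex.I)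
                * (g δ σ ξ : ℂ))‖ ≤ C * δ ^ (1 - σ) := by
  refine ⟨1/4, 2, by norm_num, by norm_num, ?_⟩
  intro σ δ hσ hσ2 hδ hδ1 h2δ h40 p q hp hq s t hs ht
  have hπ := Real.pi_pos
  have hδσ_pos : (0:ℝ) < δ ^ σ := Real.rpow_pos_of_pos hδ _
  have hδnσ_pos : (0:ℝ) < δ ^ (-σ) := Real.rpow_pos_of_pos hδ _
  set N := ⌊δ ^ (-σ)⌋₊ with hNdef
  -- basic rpow facts
  have hδσδ : δ < δ ^ σ := by
    have := Real.rpow_lt_rpow_of_exponent_gt hδ hδ1 (by linarith : σ < 1)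
    rwa [Real.rpow_one] at this
  have hone_le : (1:ℝ) ≤ δ ^ (-σ) :=
    Real.one_le_rpow_of_pos_of_le_one_of_nonpos hδ hδ1.le (by linarith)
  have hNle : (N:ℝ) ≤ δ ^ (-σ) := Nat.floor_le hδnσ_pos.le
  have hNge : δ ^ (-σ) / 2 ≤ (N:ℝ) := by
    rcases le_or_gt (δ ^ (-σ)) 2 with h | h
    · have h1 : (1:ℕ) ≤ N := Nat.le_floor (by exact_mod_cast hone_le)
      have : (1:ℝ) ≤ (N:ℝ) := by exact_mod_cast h1
      linarith
    · have := Nat.sub_one_lt_floor (δ ^ (-σ))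
      linarith
  have hinv : δ ^ (-σ) * δ ^ σ = 1 := by
    rw [← Real.rpow_add hδ]; norm_num
  have hinv2 : δ ^ (-(2*σ)) * (δ ^ σ * δ ^ σ) = 1 := by
    rw [← Real.rpow_add hδ, ← Real.rpow_add hδ,
      show -(2*σ) + (σ + σ) = 0 by ring, Real.rpow_zero]
  have hNδ1 : (N:ℝ) * δ ^ σ ≤ 1 := by
    calc (N:ℝ) * δ ^ σ ≤ δ ^ (-σ) * δ ^ σ :=
          mul_le_mul_of_nonneg_right hNle hδσ_pos.le
      _ = 1 := hinv
  have hδ1σ : δ ^ (-σ) * δ = δ ^ (1-σ) := by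
    nth_rewrite 2 [show δ = δ ^ (1:ℝ) by rw [Real.rpow_one]]
    rw [← Real.rpow_add hδ]; ring_nf
  have hδ1σ_pos : (0:ℝ) < δ ^ (1-σ) := Real.rpow_pos_of_pos hδ _
  -- s, t bounds
  have hs_nonneg : 0 ≤ s := by rw [hs]; positivity
  have ht_nonneg : 0 ≤ t := by rw [ht]; positivity
  have hδs : δ * s ≤ 1/40 := by
    have h1 : δ * δ ^ (-σ) = δ ^ (1-σ) := by rw [mul_comm]; exact hδ1σ
    have h2 : δ ^ (σ-1) * δ ^ (1-σ) = 1 := by rw [← Real.rpow_add hδ]; norm_num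
    have h3 : (p:ℝ) * δ ^ (1-σ) ≤ (1/40) * (δ ^ (σ-1) * δ ^ (1-σ)) := by
      rw [← mul_assoc]
      exact mul_le_mul_of_nonneg_right hp hδ1σ_pos.le
    rw [hs]
    calc δ * ((p:ℝ) * δ ^ (-σ)) = (p:ℝ) * (δ * δ ^ (-σ)) := by ring
      _ = (p:ℝ) * δ ^ (1-σ) := by rw [h1]
      _ ≤ (1/40) * (δ ^ (σ-1) * δ ^ (1-σ)) := h3
      _ = 1/40 := by rw [h2]; ring
  have hδt : δ * t ≤ 1/40 := by
    have h1 : δ * δ ^ (-(2*σ)) = δ ^ (1-2*σ) := by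
      nth_rewrite 1 [show δ = δ ^ (1:ℝ) by rw [Real.rpow_one]]
      rw [← Real.rpow_add hδ]; ring_nf
    have h2 : δ ^ (2*σ-1) * δ ^ (1-2*σ) = 1 := by rw [← Real.rpow_add hδ]; norm_num
    have hpos : (0:ℝ) < δ ^ (1-2*σ) := Real.rpow_pos_of_pos hδ _
    have h3 : (q:ℝ) * δ ^ (1-2*σ) ≤ (1/80) * (δ ^ (2*σ-1) * δ ^ (1-2*σ)) := by
      rw [← mul_assoc]
      exact mul_le_mul_of_nonneg_right hq hpos.le
    rw [ht]
    calc δ * (2 * (q:ℝ) * δ ^ (-(2*σ))) = 2 * ((q:ℝ) * (δ * δ ^ (-(2*σ)))) := by ring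
      _ = 2 * ((q:ℝ) * δ ^ (1-2*σ)) := by rw [h1]
      _ ≤ 2 * ((1/80) * (δ ^ (2*σ-1) * δ ^ (1-2*σ))) := by
          have := h3; nlinarith
      _ = 1/40 := by rw [h2]; ring
  -- the key pointwise cosine bound
  have key : ∀ ξ ∈ Set.Ioc (0:ℝ) 1, ∀ ℓ ∈ Finset.Icc 1 N,
      ξ ∈ Set.Ioo ((ℓ:ℝ) * δ ^ σ - δ) ((ℓ:ℝ) * δ ^ σ + δ) →
      (1:ℝ)/2 ≤ Real.cos (-(π * t * ξ ^ 2) + 2 * π * s * ξ) := by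
    intro ξ hξ ℓ hℓ hmem
    obtain ⟨hℓ1, hℓN⟩ := Finset.mem_Icc.1 hℓ
    set c : ℝ := (ℓ:ℝ) * δ ^ σ with hc
    have hℓ1R : (1:ℝ) ≤ (ℓ:ℝ) := by exact_mod_cast hℓ1
    have hℓNR : (ℓ:ℝ) ≤ (N:ℝ) := by exact_mod_cast hℓN
    have hc1 : c ≤ 1 :=
      le_trans (mul_le_mul_of_nonneg_right hℓNR hδσ_pos.le) hNδ1
    have hc0 : 0 ≤ c := by positivity
    have hdist : |ξ - c| ≤ δ := by
      rw [abs_le]; constructor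
      · linarith [hmem.1]
      · linarith [hmem.2]
    -- phase at the center is an integer multiple of 2π
    have hφc : -(π * t * c ^ 2) + 2 * π * s * c
        = (((p:ℤ) * ℓ - (q:ℤ) * ℓ^2 : ℤ) : ℝ) * (2 * π) := by
      have hcast : (((p:ℤ) * ℓ - (q:ℤ) * ℓ^2 : ℤ) : ℝ)
          = (p:ℝ) * (ℓ:ℝ) - (q:ℝ) * (ℓ:ℝ)^2 := by push_cast; ring
      rw [hcast, hs, ht, hc]
      calc -(π * (2 * (q:ℝ) * δ ^ (-(2*σ))) * ((ℓ:ℝ) * δ ^ σ) ^ 2)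
            + 2 * π * ((p:ℝ) * δ ^ (-σ)) * ((ℓ:ℝ) * δ ^ σ)
          = -(2 * π * (q:ℝ) * (ℓ:ℝ)^2) * (δ ^ (-(2*σ)) * (δ ^ σ * δ ^ σ))
            + 2 * π * (p:ℝ) * (ℓ:ℝ) * (δ ^ (-σ) * δ ^ σ) := by ring
        _ = ((p:ℝ) * (ℓ:ℝ) - (q:ℝ) * (ℓ:ℝ)^2) * (2 * π) := by
            rw [hinv2, hinv]; ring
    -- bound on the phase difference
    have hdiffbound : |(-(π * t * ξ ^ 2) + 2 * π * s * ξ)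
        - (-(π * t * c ^ 2) + 2 * π * s * c)| ≤ π / 3 := by
      have heq : (-(π * t * ξ ^ 2) + 2 * π * s * ξ) - (-(π * t * c ^ 2) + 2 * π * s * c)
          = (ξ - c) * (2 * π * s - π * t * (ξ + c)) := by ring
      rw [heq, abs_mul]
      have hξ0 : 0 ≤ ξ := hξ.1.le
      have hξ1 : ξ ≤ 1 := hξ.2
      have hb : |2 * π * s - π * t * (ξ + c)| ≤ 2 * π * s + 2 * π * t := by
        have hA : 0 ≤ π * t * (ξ + c) :=
          mul_nonneg (mul_nonneg hπ.le ht_nonneg) (by linarith)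
        have hB : π * t * (ξ + c) ≤ 2 * π * t := by
          nlinarith [mul_nonneg (mul_nonneg hπ.le ht_nonneg) (by linarith : (0:ℝ) ≤ 2 - (ξ + c))]
        have hC : 0 ≤ 2 * π * s := by positivity
        rw [abs_sub_le_iff]
        constructor
        · linarith
        · linarith
      calc |ξ - c| * |2 * π * s - π * t * (ξ + c)|
          ≤ δ * (2 * π * s + 2 * π * t) := by
            apply mul_le_mul hdist hb (abs_nonneg _) hδ.le
        _ = 2 * π * (δ * s) + 2 * π * (δ * t) := by ring
        _ ≤ 2 * π * (1/40) + 2 * π * (1/40) := by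
            have h1 := mul_le_mul_of_nonneg_left hδs (by positivity : (0:ℝ) ≤ 2 * π)
            have h2 := mul_le_mul_of_nonneg_left hδt (by positivity : (0:ℝ) ≤ 2 * π)
            linarith
        _ ≤ π / 3 := by linarith
    -- conclude with cosine monotonicity
    set D : ℝ := (-(π * t * ξ ^ 2) + 2 * π * s * ξ) - (-(π * t * c ^ 2) + 2 * π * s * c) with hD
    have hcoseq : Real.cos (-(π * t * ξ ^ 2) + 2 * π * s * ξ) = Real.cos D := by
      have : (-(π * t * ξ ^ 2) + 2 * π * s * ξ)
          = D + ((p:ℤ) * ℓ - (q:ℤ) * ℓ^2 : ℤ) * (2 * π) := by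
        rw [hD, hφc]; ring
      rw [this, Real.cos_add_int_mul_two_pi]
    rw [hcoseq]
    have h1 : Real.cos (π/3) ≤ Real.cos |D| :=
      Real.cos_le_cos_of_nonneg_of_le_pi (abs_nonneg _) (by linarith) hdiffbound
    rw [Real.cos_abs] at h1
    rw [Real.cos_pi_div_three] at h1
    exact h1
  -- measurability / integrability
  have hind_int : ∀ ℓ : ℕ, Integrable
      (Set.indicator (Set.Ioo ((ℓ:ℝ) * δ ^ σ - δ) ((ℓ:ℝ) * δ ^ σ + δ)) (fun _ => (1:ℝ)))
      volume := by
    intro ℓ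
    rw [integrable_indicator_iff measurableSet_Ioo]
    refine integrableOn_const ?_
    rw [Real.volume_Ioo]
    exact ENNReal.ofReal_ne_top
  have hg_int : Integrable (g δ σ) volume := by
    unfold g
    exact integrable_finset_sum _ fun ℓ _ => hind_int ℓ
  have hg_nonneg : ∀ x, 0 ≤ g δ σ x := by
    intro x
    unfold g
    exact Finset.sum_nonneg fun ℓ _ => Set.indicator_nonneg (fun _ _ => zero_le_one) x
  have hcont : Continuous (fun ξ : ℝ =>
      Complex.exp (((-(π * t * ξ ^ 2) + 2 * π * s * ξ : ℝ) : ℂ) * Complex.I)) := by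
    apply Complex.continuous_exp.comp
    apply Continuous.mul _ continuous_const
    apply Complex.continuous_ofReal.comp
    continuity
  have hF_int : Integrable (fun ξ : ℝ =>
      Complex.exp (((-(π * t * ξ ^ 2) + 2 * π * s * ξ : ℝ) : ℂ) * Complex.I)
        * (g δ σ ξ : ℂ)) volume := by
    apply Integrable.bdd_mul (c := 1) (hg_int.ofReal) hcont.aestronglyMeasurable
    refine Filter.Eventually.of_forall fun x => ?_
    rw [Complex.norm_exp_ofReal_mul_I]
  -- the integral of g over (0,1]
  have hmeas_inter : ∀ ℓ : ℕ, ℓ ∈ Finset.Icc 1 N →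
      δ ≤ (volume (Set.Ioo ((ℓ:ℝ) * δ ^ σ - δ) ((ℓ:ℝ) * δ ^ σ + δ) ∩ Set.Ioc 0 1)).toReal ∧
      (volume (Set.Ioo ((ℓ:ℝ) * δ ^ σ - δ) ((ℓ:ℝ) * δ ^ σ + δ) ∩ Set.Ioc 0 1)).toReal ≤ 2 * δ := by
    intro ℓ hℓ
    obtain ⟨hℓ1, hℓN⟩ := Finset.mem_Icc.1 hℓ
    have hℓ1R : (1:ℝ) ≤ (ℓ:ℝ) := by exact_mod_cast hℓ1
    have hℓNR : (ℓ:ℝ) ≤ (N:ℝ) := by exact_mod_cast hℓN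
    set c : ℝ := (ℓ:ℝ) * δ ^ σ with hc
    have hc1 : c ≤ 1 := le_trans (mul_le_mul_of_nonneg_right hℓNR hδσ_pos.le) hNδ1
    have hcδ : δ ≤ c := le_trans hδσδ.le (le_mul_of_one_le_left hδσ_pos.le hℓ1R)
    have hsub : Set.Ioo (c - δ) c ⊆ Set.Ioo (c - δ) (c + δ) ∩ Set.Ioc 0 1 := by
      intro x hx
      refine ⟨⟨hx.1, by linarith [hx.2]⟩, ⟨by linarith [hx.1], by linarith [hx.2]⟩⟩
    have hup : volume (Set.Ioo (c - δ) (c + δ) ∩ Set.Ioc 0 1)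
        ≤ ENNReal.ofReal (2 * δ) := by
      calc volume (Set.Ioo (c - δ) (c + δ) ∩ Set.Ioc 0 1)
          ≤ volume (Set.Ioo (c - δ) (c + δ)) := measure_mono Set.inter_subset_left
        _ = ENNReal.ofReal (2 * δ) := by rw [Real.volume_Ioo]; ring_nf
    have hfin : volume (Set.Ioo (c - δ) (c + δ) ∩ Set.Ioc 0 1) ≠ ⊤ :=
      (lt_of_le_of_lt hup ENNReal.ofReal_lt_top).ne
    constructor
    · have hlow : ENNReal.ofReal δ ≤ volume (Set.Ioo (c - δ) (c + δ) ∩ Set.Ioc 0 1) := by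
        calc ENNReal.ofReal δ = volume (Set.Ioo (c - δ) c) := by
              rw [Real.volume_Ioo]; ring_nf
          _ ≤ _ := measure_mono hsub
      have := ENNReal.toReal_mono hfin hlow
      rwa [ENNReal.toReal_ofReal hδ.le] at this
    · have := ENNReal.toReal_mono ENNReal.ofReal_ne_top hup
      rwa [ENNReal.toReal_ofReal (by positivity)] at this
  have hgint_eq : ∫ x in Set.Ioc (0:ℝ) 1, g δ σ x
      = ∑ ℓ ∈ Finset.Icc 1 N,
        (volume (Set.Ioo ((ℓ:ℝ) * δ ^ σ - δ) ((ℓ:ℝ) * δ ^ σ + δ) ∩ Set.Ioc 0 1)).toReal := by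
    unfold g
    rw [integral_finset_sum _ fun ℓ _ => (hind_int ℓ).integrableOn]
    refine Finset.sum_congr rfl fun ℓ _ => ?_
    rw [setIntegral_indicator measurableSet_Ioo, Set.inter_comm, setIntegral_const]
    simp
    rfl
  have hcard : (Finset.Icc 1 N).card = N := by
    rw [Nat.card_Icc]; omega
  have hgint_low : δ ^ (1-σ) / 2 ≤ ∫ x in Set.Ioc (0:ℝ) 1, g δ σ x := by
    rw [hgint_eq]
    calc δ ^ (1-σ) / 2 = (δ ^ (-σ) / 2) * δ := by rw [← hδ1σ]; ring
      _ ≤ (N:ℝ) * δ := mul_le_mul_of_nonneg_right hNge hδ.le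
      _ = ∑ _ℓ ∈ Finset.Icc 1 N, δ := by rw [Finset.sum_const, hcard, nsmul_eq_mul]
      _ ≤ _ := Finset.sum_le_sum fun ℓ hℓ => (hmeas_inter ℓ hℓ).1
  have hgint_up : (∫ x in Set.Ioc (0:ℝ) 1, g δ σ x) ≤ 2 * δ ^ (1-σ) := by
    rw [hgint_eq]
    calc (∑ ℓ ∈ Finset.Icc 1 N,
          (volume (Set.Ioo ((ℓ:ℝ) * δ ^ σ - δ) ((ℓ:ℝ) * δ ^ σ + δ) ∩ Set.Ioc 0 1)).toReal)
        ≤ ∑ _ℓ ∈ Finset.Icc 1 N, (2 * δ) :=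
          Finset.sum_le_sum fun ℓ hℓ => (hmeas_inter ℓ hℓ).2
      _ = (N:ℝ) * (2 * δ) := by rw [Finset.sum_const, hcard, nsmul_eq_mul]
      _ ≤ δ ^ (-σ) * (2 * δ) := by
          apply mul_le_mul_of_nonneg_right hNle (by positivity)
      _ = 2 * δ ^ (1-σ) := by rw [← hδ1σ]; ring
  -- switch to a set integral
  rw [intervalIntegral.integral_of_le (by norm_num : (0:ℝ) ≤ 1)]
  set J : ℂ := ∫ ξ in Set.Ioc (0:ℝ) 1,
      Complex.exp (((-(π * t * ξ ^ 2) + 2 * π * s * ξ : ℝ) : ℂ) * Complex.I)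
        * (g δ σ ξ : ℂ) with hJ
  constructor
  · -- lower bound via the real part
    have hre : J.re = ∫ ξ in Set.Ioc (0:ℝ) 1,
        Real.cos (-(π * t * ξ ^ 2) + 2 * π * s * ξ) * g δ σ ξ := by
      have hre0 := integral_re (μ := volume.restrict (Set.Ioc (0:ℝ) 1)) hF_int.integrableOn
      simp only [RCLike.re_to_complex] at hre0
      rw [hJ, ← hre0]
      refine setIntegral_congr_fun measurableSet_Ioc fun ξ _ => ?_
      rw [Complex.mul_re, Complex.exp_ofReal_mul_I_re, Complex.exp_ofReal_mul_I_im,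
        Complex.ofReal_re, Complex.ofReal_im, mul_zero, sub_zero]
    have hmono : (∫ ξ in Set.Ioc (0:ℝ) 1, (1/2) * g δ σ ξ)
        ≤ ∫ ξ in Set.Ioc (0:ℝ) 1,
            Real.cos (-(π * t * ξ ^ 2) + 2 * π * s * ξ) * g δ σ ξ := by
      apply setIntegral_mono_on
      · exact (hg_int.const_mul _).integrableOn
      · have : Integrable (fun ξ : ℝ =>
            Real.cos (-(π * t * ξ ^ 2) + 2 * π * s * ξ) * g δ σ ξ) volume := by
          apply Integrable.bdd_mul (c := 1) hg_int
          · exact (Real.continuous_cos.comp (by continuity)).aestronglyMeasurable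
          · exact Filter.Eventually.of_forall fun x => by
              rw [Real.norm_eq_abs]; exact Real.abs_cos_le_one _
        exact this.integrableOn
      · exact measurableSet_Ioc
      · intro ξ hξ
        by_cases hgz : g δ σ ξ = 0
        · rw [hgz]; ring_nf; exact le_refl _
        · have hgpos : 0 < g δ σ ξ := lt_of_le_of_ne (hg_nonneg ξ) (Ne.symm hgz)
          have : ∃ ℓ ∈ Finset.Icc 1 N,
              ξ ∈ Set.Ioo ((ℓ:ℝ) * δ ^ σ - δ) ((ℓ:ℝ) * δ ^ σ + δ) := by
            by_contra hcon
            push_neg at hcon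
            apply hgz
            unfold g
            refine Finset.sum_eq_zero fun ℓ hℓ => ?_
            exact Set.indicator_of_notMem (hcon ℓ hℓ) _
          obtain ⟨ℓ, hℓ, hmem⟩ := this
          exact mul_le_mul_of_nonneg_right (key ξ hξ ℓ hℓ hmem) (hg_nonneg ξ)
    have hconst : (∫ ξ in Set.Ioc (0:ℝ) 1, (1/2) * g δ σ ξ)
        = (1/2) * ∫ ξ in Set.Ioc (0:ℝ) 1, g δ σ ξ := by
      rw [integral_const_mul]
    have hre_low : (1/4) * δ ^ (1-σ) ≤ J.re := by
      rw [hre]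
      calc (1/4) * δ ^ (1-σ) = (1/2) * (δ ^ (1-σ) / 2) := by ring
        _ ≤ (1/2) * ∫ ξ in Set.Ioc (0:ℝ) 1, g δ σ ξ := by linarith [hgint_low]
        _ = ∫ ξ in Set.Ioc (0:ℝ) 1, (1/2) * g δ σ ξ := hconst.symm
        _ ≤ _ := hmono
    calc (1/4) * δ ^ (1-σ) ≤ J.re := hre_low
      _ ≤ ‖J‖ := Complex.re_le_norm J
  · -- upper bound
    calc ‖J‖ = ‖J‖ := rfl
      _ ≤ ∫ ξ in Set.Ioc (0:ℝ) 1, ‖Complex.exp (((-(π * t * ξ ^ 2) + 2 * π * s * ξ : ℝ) : ℂ)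
            * Complex.I) * (g δ σ ξ : ℂ)‖ := norm_integral_le_integral_norm _
      _ = ∫ ξ in Set.Ioc (0:ℝ) 1, g δ σ ξ := by
          refine setIntegral_congr_fun measurableSet_Ioc fun ξ _ => ?_
          rw [norm_mul, Complex.norm_exp_ofReal_mul_I, one_mul,
            Complex.norm_real, Real.norm_eq_abs, abs_of_nonneg (hg_nonneg ξ)]
      _ ≤ 2 * δ ^ (1-σ) := hgint_up
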